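/- Let T be a bounded self-adjoint operator on a separable infinite-dimensional complex Hilbert space H with purely continuous spectrum, and let x ∈ σ(T). Then the set {ψ ∈ H : d⁻_{μ_ψ^T}(x) = 0} is dense in H. -/

import Mathlib

open MeasureTheory Filter Set Metric
open scoped ENNReal Topology Classical

noncomputable section

/-- `μ` is uniformly `α`-Hölder continuous: there is `C > 0` with
`μ(I) < C |I|^α` for every (nondegenerate) interval `I` with `|I| < 1`. -/
def UnifHolder (μ : Measure ℝ) (α : ℝ) : Prop :=
  ∃ C > (0 : ℝ), ∀ a b : ℝ, a < b → b - a < 1 →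
    μ (Set.Icc a b) < ENNReal.ofReal (C * (b - a) ^ α)

/-- The Fourier transform `μ̂(s) = ∫ e^{-isx} dμ(x)` of a finite Borel measure on `ℝ`. -/
def measureFT (μ : Measure ℝ) (s : ℝ) : ℂ :=
  ∫ x : ℝ, Complex.exp (-(s * x) * Complex.I) ∂μ

/-- The time-average quantum return probability
`W_μ(t) = (1/t) ∫_0^t |μ̂(s)|² ds`. -/
def Wavg (μ : Measure ℝ) (t : ℝ) : ℝ :=
  (1 / t) * ∫ s in Set.Ioc (0 : ℝ) t, ‖measureFT μ s‖ ^ 2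

/-- `μ` is the spectral measure of the pair `(T, ψ)`: it is finite, vanishes outside
the spectrum of `T`, and `∫ f dμ = ⟨ψ, f(T)ψ⟩` for every continuous `f : ℝ → ℝ`,
where `f(T)` is given by the continuous functional calculus. -/
def IsSpectralMeasure {H : Type*} [NormedAddCommGroup H] [InnerProductSpace ℂ H]
    [CompleteSpace H] (T : H →L[ℂ] H) (ψ : H) (μ : Measure ℝ) : Prop :=
  IsFiniteMeasure μ ∧ μ {x : ℝ | (x : ℂ) ∉ spectrum ℂ T} = 0 ∧
    ∀ f : C(ℝ, ℝ), ∫ x, f x ∂μ = (inner ℂ ψ ((cfc (f : ℝ → ℝ) T) ψ) : ℂ).re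

/-- The real part of the spectrum of a bounded operator. -/
def realSpectrum {H : Type*} [NormedAddCommGroup H] [InnerProductSpace ℂ H]
    [CompleteSpace H] (T : H →L[ℂ] H) : Set ℝ :=
  {x : ℝ | (x : ℂ) ∈ spectrum ℂ T}

/-- `μ` is `α`-Hausdorff continuous: `μ(Λ) = 0` for every Borel set `Λ` with
`h^α(Λ) = 0`. -/
def HausdorffCont (μ : Measure ℝ) (α : ℝ) : Prop :=
  ∀ Λ : Set ℝ, MeasurableSet Λ → μH[α] Λ = 0 → μ Λ = 0

/-- The lower pointwise scaling exponent `d⁻_μ(x)`, with value `∞` when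
`μ(B(x;ε)) = 0` for some `ε > 0`. -/
def dLow (μ : Measure ℝ) (x : ℝ) : EReal :=
  if ∃ ε > (0 : ℝ), μ (Metric.ball x ε) = 0 then ⊤
  else Filter.liminf
    (fun ε : ℝ => ((Real.log (μ (Metric.ball x ε)).toReal / Real.log ε : ℝ) : EReal))
    (𝓝[>] (0 : ℝ))

/-- The upper pointwise scaling exponent `d⁺_μ(x)`, with value `∞` when
`μ(B(x;ε)) = 0` for some `ε > 0`. -/
def dUp (μ : Measure ℝ) (x : ℝ) : EReal :=
  if ∃ ε > (0 : ℝ), μ (Metric.ball x ε) = 0 then ⊤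
  else Filter.limsup
    (fun ε : ℝ => ((Real.log (μ (Metric.ball x ε)).toReal / Real.log ε : ℝ) : EReal))
    (𝓝[>] (0 : ℝ))

/-- The lower correlation dimension `D⁻_μ(2)`. -/
def DLow2 (μ : Measure ℝ) : EReal :=
  Filter.liminf
    (fun ε : ℝ =>
      ((Real.log (∫ x, (μ (Metric.ball x ε)).toReal ∂μ) / Real.log ε : ℝ) : EReal))
    (𝓝[>] (0 : ℝ))

/-- The upper correlation dimension `D⁺_μ(2)`. -/
def DUp2 (μ : Measure ℝ) : EReal :=
  Filter.limsup
    (fun ε : ℝ =>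
      ((Real.log (∫ x, (μ (Metric.ball x ε)).toReal ∂μ) / Real.log ε : ℝ) : EReal))
    (𝓝[>] (0 : ℝ))

/-- A set is generic (residual / comeagre in the Baire sense used in the paper)
if it contains a dense `G_δ` set. -/
def Generic {X : Type*} [TopologicalSpace X] (A : Set X) : Prop :=
  ∃ S : Set X, S ⊆ A ∧ IsGδ S ∧ Dense S


section StmtTwelveAux

/-- plateau: 1 on closedBall x (ε/2), 0 outside ball x ε, values in [0,1] -/
def plat (x ε : ℝ) : ℝ → ℝ := fun y => max 0 (min 1 (2 - 2 * |y - x| / ε))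

lemma plat_cont (x ε : ℝ) : Continuous (plat x ε) := by
  unfold plat; fun_prop

lemma plat_nonneg (x ε y : ℝ) : 0 ≤ plat x ε y := le_max_left _ _

lemma plat_le_one (x ε y : ℝ) : plat x ε y ≤ 1 := by
  unfold plat
  rcases le_or_gt (min 1 (2 - 2 * |y - x| / ε)) 0 with h | h
  · simp [max_eq_left h]
  · rw [max_eq_right h.le]; exact min_le_left _ _

lemma plat_eq_one {x ε : ℝ} (hε : 0 < ε) {y : ℝ} (hy : |y - x| ≤ ε / 2) :
    plat x ε y = 1 := by
  unfold plat
  have h1 : (1:ℝ) ≤ 2 - 2 * |y - x| / ε := by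
    have h2 : 2 * |y - x| / ε ≤ 1 := by
      rw [div_le_one hε]; nlinarith
    linarith
  rw [min_eq_left h1]
  simp

lemma plat_support {x ε : ℝ} (hε : 0 < ε) {y : ℝ} (hy : plat x ε y ≠ 0) :
    |y - x| < ε := by
  by_contra h
  push_neg at h
  apply hy
  unfold plat
  have : 2 - 2 * |y - x| / ε ≤ 0 := by
    rw [sub_nonpos, le_div_iff₀ hε]
    nlinarith
  rw [max_eq_left]
  exact le_trans (min_le_right _ _) this

lemma plat_hcs (x : ℝ) {ε : ℝ} (hε : 0 < ε) : HasCompactSupport (plat x ε) := by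
  apply HasCompactSupport.intro (isCompact_closedBall x ε)
  intro y hy
  by_contra h
  exact hy (mem_closedBall_iff_norm.mpr (by
    simpa [Real.norm_eq_abs] using (plat_support hε h).le))

lemma integral_le_toReal_of_le_indicator {μ : Measure ℝ} [IsFiniteMeasure μ]
    {f : ℝ → ℝ} (hf : Continuous f)
    (hcs : HasCompactSupport f) {s : Set ℝ} (hs : MeasurableSet s)
    (hle : ∀ y, f y ≤ s.indicator 1 y) :
    ∫ y, f y ∂μ ≤ (μ s).toReal := by
  have hind : Integrable (s.indicator (1 : ℝ → ℝ)) μ := by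
    rw [integrable_indicator_iff hs]
    exact (integrableOn_const_iff).mpr (Or.inr (measure_lt_top μ s))
  calc ∫ y, f y ∂μ ≤ ∫ y, s.indicator 1 y ∂μ :=
        integral_mono (hf.integrable_of_hasCompactSupport hcs) hind hle
    _ = (μ s).toReal := by rw [integral_indicator_one hs]; rfl

variable {H : Type*} [NormedAddCommGroup H] [InnerProductSpace ℂ H] [CompleteSpace H]

lemma integral_eq_sq_norm (T : H →L[ℂ] H) (hT : IsSelfAdjoint T) {ψ : H} {μ : Measure ℝ}
    (hsm : ∀ f : C(ℝ, ℝ), ∫ y, f y ∂μ = (inner ℂ ψ ((cfc (f : ℝ → ℝ) T) ψ) : ℂ).re)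
    (f : ℝ → ℝ) (hf : Continuous f) (hf0 : ∀ y, 0 ≤ f y) :
    ∫ y, f y ∂μ = ‖cfc (fun y => Real.sqrt (f y)) T ψ‖ ^ 2 := by
  have hs : Continuous fun y => Real.sqrt (f y) := Real.continuous_sqrt.comp hf
  set A := cfc (fun y => Real.sqrt (f y)) T with hA_def
  have hA : IsSelfAdjoint A := cfc_predicate _ T
  have h2 : cfc f T = A * A := by
    rw [hA_def, ← cfc_mul _ _ T hs.continuousOn hs.continuousOn]
    exact cfc_congr fun y _ => (Real.mul_self_sqrt (hf0 y)).symm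
  have h3 : (inner ℂ ψ ((cfc f T) ψ) : ℂ) = inner ℂ (A ψ) (A ψ) := by
    rw [h2, ContinuousLinearMap.mul_apply]
    nth_rewrite 1 [← hA.adjoint_eq]
    exact ContinuousLinearMap.adjoint_inner_right A ψ (A ψ)
  have h4 := hsm ⟨f, hf⟩
  simp only [ContinuousMap.coe_mk] at h4
  rw [h4, h3]
  exact inner_self_eq_norm_sq (𝕜 := ℂ) (A ψ)

lemma exists_chi (T : H →L[ℂ] H) (hT : IsSelfAdjoint T) {x : ℝ} (hx : x ∈ spectrum ℝ T)
    {ε : ℝ} (hε : 0 < ε) :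
    ∃ χ : H, ‖χ‖ = 1 ∧ cfc (fun y => Real.sqrt (plat x ε y)) T χ = χ := by
  set g := plat x (ε / 2) with hg_def
  have hgc : Continuous g := plat_cont _ _
  have hsc : Continuous fun y => Real.sqrt (plat x ε y) :=
    Real.continuous_sqrt.comp (plat_cont _ _)
  have hone : (1 : ℝ) ∈ spectrum ℝ (cfc g T) := by
    rw [cfc_map_spectrum g T]
    exact ⟨x, hx, plat_eq_one (by linarith) (by simp [abs_nonneg]; linarith)⟩
  have hne : cfc g T ≠ 0 := by
    intro h0
    rw [h0, spectrum.mem_iff] at hone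
    simp at hone
  obtain ⟨η, hη⟩ : ∃ η : H, cfc g T η ≠ 0 := by
    by_contra hc
    push_neg at hc
    exact hne (ContinuousLinearMap.ext fun η => by simpa using hc η)
  set v := cfc g T η with hv_def
  refine ⟨‖v‖⁻¹ • v, ?_, ?_⟩
  · rw [norm_smul]
    simp [norm_ne_zero_iff.mpr hη]
  · rw [ContinuousLinearMap.map_smul_of_tower]
    congr 1
    have hmul : cfc (fun y => Real.sqrt (plat x ε y)) T * cfc g T = cfc g T := by
      rw [← cfc_mul _ _ T hsc.continuousOn hgc.continuousOn]
      apply cfc_congr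
      intro y _
      rcases eq_or_ne (g y) 0 with h | h
      · simp [h]
      · have h1 : plat x ε y = 1 := plat_eq_one hε (by
          have := plat_support (by linarith : (0:ℝ) < ε / 2) h
          linarith)
        simp [h1]
    calc cfc (fun y => Real.sqrt (plat x ε y)) T v
        = (cfc (fun y => Real.sqrt (plat x ε y)) T * cfc g T) η := rfl
      _ = v := by rw [hmul]

end StmtTwelveAux

set_option maxHeartbeats 2000000 in
/-- For `T` with purely continuous spectrum and `x ∈ σ(T)`, the set
`{ψ | d⁻_{μ_ψ}(x) = 0}` is dense in `H`. -/
theorem stmt_12 {H : Type*} [NormedAddCommGroup H] [InnerProductSpace ℂ H] [CompleteSpace H]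
    [TopologicalSpace.SeparableSpace H] (hinf : ¬ FiniteDimensional ℂ H)
    (T : H →L[ℂ] H) (hT : IsSelfAdjoint T)
    (μm : H → Measure ℝ) (hμm : ∀ ψ : H, IsSpectralMeasure T ψ (μm ψ))
    (hcont : ∀ (ψ : H) (x : ℝ), μm ψ {x} = 0)
    (x : ℝ) (hx : x ∈ realSpectrum T) :
    Dense {ψ : H | dLow (μm ψ) x = 0} := by
  have hxR : x ∈ spectrum ℝ T := by
    rw [← spectrum.algebraMap_mem_iff ℂ]; simpa using (show (x:ℂ) ∈ spectrum ℂ T from hx)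
  rw [Metric.dense_iff]
  intro ψ₀ δ hδ
  -- spectral measure basics
  have hfin : ∀ ψ : H, IsFiniteMeasure (μm ψ) := fun ψ => (hμm ψ).1
  have hint : ∀ (ψ : H) (f : ℝ → ℝ), Continuous f → (∀ y, 0 ≤ f y) →
      ∫ y, f y ∂(μm ψ) = ‖cfc (fun y => Real.sqrt (f y)) T ψ‖ ^ 2 :=
    fun ψ f hf hf0 => integral_eq_sq_norm T hT (hμm ψ).2.2 f hf hf0
  -- q ε ψ = ‖√(plat x ε)(T) ψ‖
  set q : ℝ → H → ℝ := fun ε ψ => ‖cfc (fun y => Real.sqrt (plat x ε y)) T ψ‖ with hq_def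
  have hq_nonneg : ∀ ε ψ, 0 ≤ q ε ψ := fun ε ψ => norm_nonneg _
  have hq_sq : ∀ ε : ℝ, ∀ ψ, q ε ψ ^ 2 = ∫ y, plat x ε y ∂(μm ψ) := by
    intro ε ψ
    rw [hint ψ _ (plat_cont x ε) (plat_nonneg x ε)]
  have hq_ball : ∀ ε : ℝ, 0 < ε → ∀ ψ, q ε ψ ^ 2 ≤ (μm ψ (ball x ε)).toReal := by
    intro ε hε ψ
    haveI := hfin ψ
    rw [hq_sq]
    apply integral_le_toReal_of_le_indicator (plat_cont x ε) (plat_hcs x hε)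
      measurableSet_ball
    intro y
    by_cases hy : y ∈ ball x ε
    · rw [Set.indicator_of_mem hy]; exact plat_le_one x ε y
    · rw [Set.indicator_of_notMem hy]
      by_contra hne
      apply hy
      rw [mem_ball, Real.dist_eq]
      exact plat_support hε (by intro h0; exact hne (le_of_eq h0))
  have hq_op : ∀ ε : ℝ, ∀ ψ, q ε ψ ≤ ‖ψ‖ := by
    intro ε ψ
    have hb : ‖cfc (fun y => Real.sqrt (plat x ε y)) T‖ ≤ 1 := by
      apply norm_cfc_le zero_le_one
      intro y _
      rw [Real.norm_eq_abs, abs_of_nonneg (Real.sqrt_nonneg _)]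
      rw [show (1:ℝ) = Real.sqrt 1 by simp]
      exact Real.sqrt_le_sqrt (plat_le_one x ε y)
    calc q ε ψ ≤ ‖cfc (fun y => Real.sqrt (plat x ε y)) T‖ * ‖ψ‖ :=
          ContinuousLinearMap.le_opNorm _ ψ
      _ ≤ 1 * ‖ψ‖ := by
          exact mul_le_mul_of_nonneg_right hb (norm_nonneg ψ)
      _ = ‖ψ‖ := one_mul _
  -- measure of closed balls tends to 0
  have htend : ∀ ψ : H, Tendsto (fun ε => (μm ψ (closedBall x ε)).toReal)
      (𝓝[>] (0:ℝ)) (𝓝 0) := by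
    intro ψ
    haveI := hfin ψ
    have h1 : Tendsto (fun r => μm ψ (Metric.cthickening r {x})) (𝓝 0) (𝓝 (μm ψ {x})) :=
      tendsto_measure_cthickening_of_isClosed
        ⟨1, one_pos, (measure_lt_top _ _).ne⟩ isClosed_singleton
    have h2 : Tendsto (fun r => μm ψ (Metric.cthickening r {x})) (𝓝[>] (0:ℝ)) (𝓝 0) := by
      rw [hcont ψ x] at h1
      exact h1.mono_left nhdsWithin_le_nhds
    have h3 : Tendsto (fun r => μm ψ (closedBall x r)) (𝓝[>] (0:ℝ)) (𝓝 0) := by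
      apply h2.congr'
      filter_upwards [self_mem_nhdsWithin] with r hr
      rw [Metric.cthickening_singleton x (le_of_lt hr)]
    have h4 := (ENNReal.tendsto_toReal (by simp : (0:ℝ≥0∞) ≠ ⊤)).comp h3
    exact h4
  -- total mass
  have hmass : ∀ ψ : H, (μm ψ Set.univ).toReal = ‖ψ‖ ^ 2 := by
    intro ψ
    haveI := hfin ψ
    have h1 := hint ψ (fun _ => (1:ℝ)) continuous_const (fun _ => zero_le_one)
    have h2 : cfc (fun y : ℝ => Real.sqrt 1) T = 1 := by
      calc cfc (fun y : ℝ => Real.sqrt 1) T = cfc (fun _ : ℝ => (1:ℝ)) T :=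
            cfc_congr (fun y _ => by simp)
        _ = 1 := cfc_const_one ℝ T
    rw [h2] at h1
    simp [integral_const] at h1; exact h1
  -- constants
  set a : ℕ → ℝ := fun k => δ * (1/4) ^ (k+1) with ha_def
  have ha_pos : ∀ k, 0 < a k := fun k => by positivity
  have ha_sum : Summable a := by
    apply Summable.mul_left
    exact (summable_geometric_of_lt_one (by norm_num) (by norm_num)).comp_injective
      (add_left_injective 1)
  have ha_tsum : ∀ k : ℕ, ∑' m, a (k + m) = δ * (1/4) ^ k / 3 := by
    intro k
    have : ∀ m : ℕ, a (k + m) = (δ * (1/4)^(k+1)) * (1/4) ^ m := by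
      intro m
      rw [ha_def]
      simp only []
      rw [show k + m + 1 = (k+1) + m by ring, pow_add]
      ring
    rw [tsum_congr this, tsum_mul_left, tsum_geometric_of_lt_one (by norm_num) (by norm_num)]
    rw [pow_succ]
    norm_num
    ring
  set M : ℝ := (‖ψ₀‖ + δ) ^ 2 + 1 with hM_def
  have hM_pos : 0 < M := by positivity
  set c : ℕ → ℝ := fun k => 1 + |Real.log ((a k / 3) ^ 2)| + |Real.log M| with hc_def
  have hc_ge : ∀ k, 1 ≤ c k := fun k => by
    rw [hc_def]
    have := abs_nonneg (Real.log ((a k / 3) ^ 2))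
    have := abs_nonneg (Real.log M)
    simp only []
    linarith
  have hc_pos : ∀ k, 0 < c k := fun k => lt_of_lt_of_le one_pos (hc_ge k)
  -- the inductive step
  have hstep : ∀ (k : ℕ) (w : H), ∃ ε : ℝ, (0 < ε ∧ ε ≤ Real.exp (-(k+1 : ℝ) * c k) ∧
      (μm w (closedBall x ε)).toReal ≤ (a k / 4) ^ 2) ∧
      ∃ χ : H, ‖χ‖ = 1 ∧ cfc (fun y => Real.sqrt (plat x ε y)) T χ = χ := by
    intro k w
    have hev1 : ∀ᶠ ε in 𝓝[>] (0:ℝ), (μm w (closedBall x ε)).toReal ≤ (a k / 4) ^ 2 := by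
      have hb : (0:ℝ) < (a k / 4) ^ 2 := by positivity
      filter_upwards [(htend w).eventually (eventually_le_nhds hb)] with ε hε using hε
    have hev2 : ∀ᶠ ε in 𝓝[>] (0:ℝ), ε ≤ Real.exp (-(k+1 : ℝ) * c k) ∧ 0 < ε := by
      filter_upwards [Ioc_mem_nhdsGT_of_mem ⟨le_refl (0:ℝ), Real.exp_pos _⟩] with ε hε
      exact ⟨hε.2, hε.1⟩
    obtain ⟨ε, h1, h2, h3⟩ := (hev1.and hev2).exists
    exact ⟨ε, ⟨h3, h2, h1⟩, exists_chi T hT hxR h3⟩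
  choose eps heps chi hchi_norm hchi_fix using hstep
  -- the sequence of partial sums
  set v : ℕ → H := fun k => Nat.rec ψ₀ (fun k w => w + a k • chi k w) k with hv_def
  have hvs : ∀ k, v (k+1) = v k + a k • chi k (v k) := fun k => rfl
  set e : ℕ → ℝ := fun k => eps k (v k) with he_def
  set s : ℕ → H := fun k => chi k (v k) with hs_def
  have he_pos : ∀ k, 0 < e k := fun k => (heps k (v k)).1
  have he_exp : ∀ k, e k ≤ Real.exp (-(k+1 : ℝ) * c k) := fun k => (heps k (v k)).2.1
  have he_meas : ∀ k, (μm (v k) (closedBall x (e k))).toReal ≤ (a k / 4) ^ 2 :=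
    fun k => (heps k (v k)).2.2
  have hs_norm : ∀ k, ‖s k‖ = 1 := fun k => hchi_norm k (v k)
  have hs_fix : ∀ k, cfc (fun y => Real.sqrt (plat x (e k) y)) T (s k) = s k :=
    fun k => hchi_fix k (v k)
  -- convergence
  have hdist : ∀ n, dist (v n) (v (n+1)) ≤ a n := by
    intro n
    rw [dist_eq_norm, hvs]
    simp only [sub_add_cancel_left, norm_neg]
    rw [norm_smul, Real.norm_eq_abs, abs_of_pos (ha_pos n), hs_norm n]
    simp
  have hcauchy : CauchySeq v := cauchySeq_of_dist_le_of_summable a hdist ha_sum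
  obtain ⟨φ, hφ⟩ := cauchySeq_tendsto_of_complete hcauchy
  have htail : ∀ n, dist (v n) φ ≤ ∑' m, a (n + m) :=
    fun n => dist_le_tsum_of_dist_le_of_tendsto a hdist ha_sum hφ n
  have htail' : ∀ n, dist (v n) φ ≤ δ * (1/4) ^ n / 3 := by
    intro n
    calc dist (v n) φ ≤ ∑' m, a (n + m) := htail n
      _ = δ * (1/4) ^ n / 3 := ha_tsum n
  have hdist0 : dist ψ₀ φ ≤ δ / 3 := by
    have := htail' 0
    simp only [pow_zero, mul_one] at this; exact this
  have hφball : φ ∈ ball ψ₀ δ := by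
    rw [mem_ball, dist_comm]
    calc dist ψ₀ φ ≤ δ / 3 := hdist0
      _ < δ := by linarith
  -- lower bound on the measure of φ at scales e k
  have hlow : ∀ k, (a k / 3) ^ 2 ≤ (μm φ (ball x (e k))).toReal := by
    intro k
    set A := cfc (fun y => Real.sqrt (plat x (e k) y)) T with hA_def
    have h1 : ‖A (a k • s k)‖ = a k := by
      rw [ContinuousLinearMap.map_smul_of_tower, hs_fix k, norm_smul,
        Real.norm_eq_abs, abs_of_pos (ha_pos k), hs_norm k, mul_one]
    have h2 : a k • s k = (φ - v k) - (φ - v (k+1)) := by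
      rw [hvs]; abel
    have h3 : a k ≤ q (e k) φ + q (e k) (v k) + ‖φ - v (k+1)‖ := by
      have hA2 : A (a k • s k) = A φ - A (v k) - A (φ - v (k+1)) := by
        rw [h2]; rw [map_sub, map_sub]
      have hA3 : ‖A (a k • s k)‖ ≤ ‖A φ‖ + ‖A (v k)‖ + ‖A (φ - v (k+1))‖ := by
        rw [hA2]
        calc ‖A φ - A (v k) - A (φ - v (k+1))‖
            ≤ ‖A φ - A (v k)‖ + ‖A (φ - v (k+1))‖ := norm_sub_le _ _
          _ ≤ ‖A φ‖ + ‖A (v k)‖ + ‖A (φ - v (k+1))‖ := by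
              have := norm_sub_le (A φ) (A (v k))
              linarith
      rw [h1] at hA3
      have hA4 : ‖A (φ - v (k+1))‖ ≤ ‖φ - v (k+1)‖ := hq_op (e k) _
      have : q (e k) φ = ‖A φ‖ := rfl
      have : q (e k) (v k) = ‖A (v k)‖ := rfl
      calc a k ≤ ‖A φ‖ + ‖A (v k)‖ + ‖A (φ - v (k+1))‖ := hA3
        _ ≤ q (e k) φ + q (e k) (v k) + ‖φ - v (k+1)‖ := by
            apply add_le_add (le_of_eq rfl) hA4
    have h4 : q (e k) (v k) ≤ a k / 4 := by
      have hsq : q (e k) (v k) ^ 2 ≤ (a k / 4) ^ 2 := by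
        calc q (e k) (v k) ^ 2 ≤ (μm (v k) (ball x (e k))).toReal :=
              hq_ball (e k) (he_pos k) (v k)
          _ ≤ (μm (v k) (closedBall x (e k))).toReal := by
              haveI := hfin (v k)
              exact ENNReal.toReal_mono (measure_lt_top _ _).ne
                (measure_mono ball_subset_closedBall)
          _ ≤ (a k / 4) ^ 2 := he_meas k
      exact (pow_le_pow_iff_left₀ (hq_nonneg _ _) (by positivity) two_ne_zero).mp hsq
    have h5 : ‖φ - v (k+1)‖ ≤ a k / 3 := by
      rw [← dist_eq_norm, dist_comm]
      calc dist (v (k+1)) φ ≤ δ * (1/4) ^ (k+1) / 3 := htail' (k+1)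
        _ = a k / 3 := by rw [ha_def]
    have h6 : a k / 3 ≤ q (e k) φ := by
      have := h3
      have := ha_pos k
      linarith
    calc (a k / 3) ^ 2 ≤ q (e k) φ ^ 2 := by
          apply sq_le_sq' _ h6
          have : 0 ≤ q (e k) φ := hq_nonneg _ _
          linarith [ha_pos k]
      _ ≤ (μm φ (ball x (e k))).toReal := hq_ball (e k) (he_pos k) φ
  -- upper bound on all measures of φ
  have hφn : ‖φ‖ ≤ ‖ψ₀‖ + δ := by
    calc ‖φ‖ = ‖ψ₀ + (φ - ψ₀)‖ := by
          have h : ψ₀ + (φ - ψ₀) = φ := by abel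
          rw [h]
      _ ≤ ‖ψ₀‖ + ‖φ - ψ₀‖ := norm_add_le _ _
      _ ≤ ‖ψ₀‖ + δ := by
          have h1 : ‖φ - ψ₀‖ ≤ δ / 3 := by
            rw [← dist_eq_norm, dist_comm]; exact hdist0
          linarith
  have hub : ∀ s : Set ℝ, (μm φ s).toReal ≤ M := by
    intro s
    haveI := hfin φ
    calc (μm φ s).toReal ≤ (μm φ Set.univ).toReal :=
          ENNReal.toReal_mono (measure_lt_top _ _).ne (measure_mono (subset_univ s))
      _ = ‖φ‖ ^ 2 := hmass φ
      _ ≤ M := by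
          rw [hM_def]
          nlinarith [norm_nonneg φ, norm_nonneg ψ₀, hδ]
  -- e tends to 0 within Ioi 0
  have he_exp' : ∀ k, e k ≤ Real.exp (-(k+1 : ℝ)) := by
    intro k
    refine le_trans (he_exp k) (Real.exp_le_exp.mpr ?_)
    have h1 : (0:ℝ) < (k:ℝ) + 1 := by positivity
    nlinarith [hc_ge k]
  have hexp0 : Tendsto (fun k : ℕ => Real.exp (-(k+1 : ℝ))) atTop (𝓝 0) := by
    apply Real.tendsto_exp_atBot.comp
    apply tendsto_neg_atTop_atBot.comp
    exact tendsto_atTop_add_const_right _ 1 tendsto_natCast_atTop_atTop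
  have he_lim0 : Tendsto e atTop (𝓝 (0:ℝ)) :=
    squeeze_zero (fun k => (he_pos k).le) he_exp' hexp0
  have he_lim : Tendsto e atTop (𝓝[>] (0:ℝ)) :=
    tendsto_nhdsWithin_of_tendsto_nhds_of_eventually_within e he_lim0
      (Eventually.of_forall he_pos)
  -- positivity of balls
  have hposball : ∀ ε : ℝ, 0 < ε → μm φ (ball x ε) ≠ 0 := by
    intro ε hε h0
    obtain ⟨k, hk⟩ : ∃ k, e k < ε := (he_lim0.eventually (gt_mem_nhds hε)).exists
    have h1 := hlow k
    have h2 : μm φ (ball x (e k)) ≤ μm φ (ball x ε) :=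
      measure_mono (ball_subset_ball hk.le)
    rw [h0, le_zero_iff] at h2
    rw [h2] at h1
    simp only [ENNReal.toReal_zero] at h1
    nlinarith [ha_pos k]
  have hnotex : ¬ ∃ ε > (0:ℝ), μm φ (ball x ε) = 0 := by
    rintro ⟨ε, hε, h0⟩
    exact hposball ε hε h0
  refine ⟨φ, hφball, ?_⟩
  show dLow (μm φ) x = 0
  rw [dLow, if_neg hnotex]
  set r : ℝ → EReal :=
    fun ε : ℝ => ((Real.log ((μm φ) (Metric.ball x ε)).toReal / Real.log ε : ℝ) : EReal)
    with hr_def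
  have hge : (0:EReal) ≤ liminf r (𝓝[>] (0:ℝ)) := by
    apply Filter.le_liminf_of_le (by isBoundedDefault)
    have hev1 : ∀ᶠ ε in 𝓝[>] (0:ℝ), ((μm φ) (closedBall x ε)).toReal < 1 :=
      (htend φ).eventually (gt_mem_nhds one_pos)
    have hev2 : ∀ᶠ ε in 𝓝[>] (0:ℝ), ε < 1 ∧ 0 < ε := by
      filter_upwards [Ioo_mem_nhdsGT_of_mem ⟨le_refl (0:ℝ), one_pos⟩] with ε hε
      exact ⟨hε.2, hε.1⟩
    filter_upwards [hev1, hev2] with ε h1 h2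
    have hmono : ((μm φ) (ball x ε)).toReal ≤ ((μm φ) (closedBall x ε)).toReal := by
      haveI := hfin φ
      exact ENNReal.toReal_mono (measure_lt_top _ _).ne
        (measure_mono ball_subset_closedBall)
    have hnum : Real.log ((μm φ) (ball x ε)).toReal ≤ 0 :=
      Real.log_nonpos ENNReal.toReal_nonneg (le_trans hmono h1.le)
    have hden : Real.log ε < 0 := Real.log_neg h2.2 h2.1
    exact EReal.coe_nonneg.mpr (div_nonneg_iff.mpr (Or.inr ⟨hnum, hden.le⟩))
  have hle : liminf r (𝓝[>] (0:ℝ)) ≤ 0 := by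
    have h1 : liminf r (𝓝[>] (0:ℝ)) ≤ liminf r (Filter.map e atTop) :=
      liminf_le_liminf_of_le he_lim
    rw [← Filter.liminf_comp] at h1
    set R : ℕ → ℝ :=
      fun k => Real.log ((μm φ) (ball x (e k))).toReal / Real.log (e k) with hR_def
    have hRb : ∀ k, |R k| ≤ 1 / ((k:ℝ) + 1) := by
      intro k
      have hmpos : (0:ℝ) < (a k / 3) ^ 2 := by positivity
      have htpos : (0:ℝ) < ((μm φ) (ball x (e k))).toReal := lt_of_lt_of_le hmpos (hlow k)
      have hL : Real.log (e k) ≤ -((k:ℝ)+1) * c k := by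
        calc Real.log (e k) ≤ Real.log (Real.exp (-((k:ℝ)+1) * c k)) :=
              Real.log_le_log (he_pos k) (he_exp k)
          _ = -((k:ℝ)+1) * c k := Real.log_exp _
      have hLneg : Real.log (e k) < 0 := by
        apply lt_of_le_of_lt hL
        have h := mul_pos (show (0:ℝ) < (k:ℝ)+1 by positivity) (hc_pos k)
        linarith
      have hLabs : ((k:ℝ)+1) * c k ≤ |Real.log (e k)| := by
        rw [abs_of_neg hLneg]
        linarith
      have hN : |Real.log ((μm φ) (ball x (e k))).toReal| ≤ c k := by
        rw [abs_le]
        constructor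
        · have h2 : Real.log ((a k / 3) ^ 2) ≤ Real.log ((μm φ) (ball x (e k))).toReal :=
            Real.log_le_log hmpos (hlow k)
          have h3 : -(c k) ≤ Real.log ((a k / 3) ^ 2) := by
            have hck : c k = 1 + |Real.log ((a k / 3) ^ 2)| + |Real.log M| := rfl
            have h4 := neg_abs_le (Real.log ((a k / 3) ^ 2))
            have h5 := abs_nonneg (Real.log M)
            rw [hck]
            linarith
          exact le_trans h3 h2
        · have h2 : Real.log ((μm φ) (ball x (e k))).toReal ≤ Real.log M :=
            Real.log_le_log htpos (hub _)
          have h3 : Real.log M ≤ c k := by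
            have hck : c k = 1 + |Real.log ((a k / 3) ^ 2)| + |Real.log M| := rfl
            have h4 := le_abs_self (Real.log M)
            have h5 := abs_nonneg (Real.log ((a k / 3) ^ 2))
            rw [hck]
            linarith
          exact le_trans h2 h3
      have hden_pos : (0:ℝ) < ((k:ℝ)+1) * c k := by
        have := hc_pos k
        positivity
      calc |R k| = |Real.log ((μm φ) (ball x (e k))).toReal| / |Real.log (e k)| := by
            rw [hR_def]; exact abs_div _ _
        _ ≤ c k / (((k:ℝ)+1) * c k) := div_le_div₀ (hc_pos k).le hN hden_pos hLabs
        _ = 1 / ((k:ℝ)+1) := by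
            rw [eq_div_iff (by positivity)]
            field_simp
            ring_nf; exact mul_inv_cancel₀ (hc_pos k).ne'
    have hR0 : Tendsto R atTop (𝓝 0) := by
      apply squeeze_zero_norm _ tendsto_one_div_add_atTop_nhds_zero_nat
      intro k
      simpa [Real.norm_eq_abs] using hRb k
    have hre : Tendsto (r ∘ e) atTop (𝓝 (0:EReal)) := by
      have h2 : Tendsto (fun k => ((R k : ℝ) : EReal)) atTop (𝓝 ((0:ℝ) : EReal)) :=
        EReal.tendsto_coe.mpr hR0
      rw [EReal.coe_zero] at h2
      exact h2
    rw [hre.liminf_eq] at h1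
    exact h1
  exact le_antisymm hle hge
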